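/- Let m ≥ 2 be an even natural number, let a₁, …, a_m, q, p be integers, and define z : ℕ → ℤ by z₀ = q, z₁ = p, and z_{n+1} = 2·a_n·z_n + z_{n−1} for 1 ≤ n ≤ m. For an integer a let L(a) be the 4×4 integer matrix with rows (1,0,0,0), (a,1,−a,0), (0,0,1,0), (−a,0,a,1), and let M(b) be the 4×4 integer matrix with rows (1,b,0,−b), (0,1,0,0), (0,−b,1,b), (0,0,0,1). Let w ∈ ℤ⁴ be the result of applying the product L(a_m)·M(a_{m−1})·L(a_{m−2})·⋯·L(a₂)·M(a₁) (the factor with a_i being L(a_i) for even i and M(a_i) for odd i, multiplied in decreasing order of i) to the column vector (q, p, 0, 0). Then 2·w = (z_m + q, z_{m+1} + p, −(z_m − q), −(z_{m+1} − p)). -/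
import Mathlib

def Lmat (a : ℤ) : Matrix (Fin 4) (Fin 4) ℤ :=
  !![1, 0, 0, 0; a, 1, -a, 0; 0, 0, 1, 0; -a, 0, a, 1]

def Mmat (b : ℤ) : Matrix (Fin 4) (Fin 4) ℤ :=
  !![1, b, 0, -b; 0, 1, 0, 0; 0, -b, 1, b; 0, 0, 0, 1]

def prodMat (a : ℕ → ℤ) (m : ℕ) : Matrix (Fin 4) (Fin 4) ℤ :=
  (((List.range m).reverse.map
    (fun j => if Even (j + 1) then Lmat (a (j + 1)) else Mmat (a (j + 1))))).prod

lemma prodMat_succ (a : ℕ → ℤ) (m : ℕ) :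
    prodMat a (m + 1) =
      (if Even (m + 1) then Lmat (a (m + 1)) else Mmat (a (m + 1))) * prodMat a m := by
  simp [prodMat, List.range_succ]

lemma Lmat_mulVec (c : ℤ) (v : Fin 4 → ℤ) :
    (Lmat c).mulVec v = ![v 0, c * v 0 + v 1 - c * v 2, v 2, -(c * v 0) + c * v 2 + v 3] := by
  funext i
  fin_cases i <;>
    (simp [Lmat, Matrix.mulVec, dotProduct, Fin.sum_univ_four]; try ring)

lemma Mmat_mulVec (c : ℤ) (v : Fin 4 → ℤ) :
    (Mmat c).mulVec v = ![v 0 + c * v 1 - c * v 3, v 1, -(c * v 1) + v 2 + c * v 3, v 3] := by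
  funext i
  fin_cases i <;>
    (simp [Mmat, Matrix.mulVec, dotProduct, Fin.sum_univ_four]; try ring)

lemma key (a : ℕ → ℤ) (q p : ℤ) (z : ℕ → ℤ) (hz0 : z 0 = q) (hz1 : z 1 = p)
    (k : ℕ) (hk : 1 ≤ k)
    (hrec : ∀ n, 1 ≤ n → n ≤ 2 * k → z (n + 1) = 2 * a n * z n + z (n - 1)) :
    (2 : ℤ) • (prodMat a (2 * k)).mulVec ![q, p, 0, 0] =
      ![z (2 * k) + q, z (2 * k + 1) + p, -(z (2 * k) - q), -(z (2 * k + 1) - p)] := by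
  induction k, hk using Nat.le_induction with
  | base =>
    have h2 : z 2 = 2 * a 1 * z 1 + z 0 := hrec 1 (by norm_num) (by norm_num)
    have h3 : z 3 = 2 * a 2 * z 2 + z 1 := hrec 2 (by norm_num) (by norm_num)
    have hp : prodMat a 2 = Lmat (a 2) * (Mmat (a 1) * prodMat a 0) := by
      rw [show (2 : ℕ) = 1 + 1 from rfl, prodMat_succ, prodMat_succ]
      norm_num
    have hp0 : prodMat a 0 = 1 := rfl
    rw [hp, hp0, mul_one, ← Matrix.mulVec_mulVec, Mmat_mulVec, Lmat_mulVec]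
    funext i
    fin_cases i <;>
      (simp; simp only [h3, h2, hz1, hz0]; ring)
  | succ k hk ih =>
    have hrec' : ∀ n, 1 ≤ n → n ≤ 2 * k → z (n + 1) = 2 * a n * z n + z (n - 1) :=
      fun n h1 h2 => hrec n h1 (by omega)
    have ih' := ih hrec'
    have h1 : z (2 * k + 2) = 2 * a (2 * k + 1) * z (2 * k + 1) + z (2 * k) := by
      have := hrec (2 * k + 1) (by omega) (by omega)
      simpa using this
    have h2 : z (2 * k + 3) = 2 * a (2 * k + 2) * z (2 * k + 2) + z (2 * k + 1) := by
      have := hrec (2 * k + 2) (by omega) (by omega)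
      simpa using this
    have hp : prodMat a (2 * (k + 1)) =
        Lmat (a (2 * k + 2)) * (Mmat (a (2 * k + 1)) * prodMat a (2 * k)) := by
      rw [show 2 * (k + 1) = (2 * k + 1) + 1 by ring, prodMat_succ, prodMat_succ]
      have he1 : Even (2 * k + 1 + 1) := by exact ⟨k + 1, by ring⟩
      have he2 : ¬ Even (2 * k + 1) := by simp [Nat.even_add_one]
      rw [if_pos he1, if_neg he2]
    rw [hp, ← Matrix.mulVec_mulVec, ← Matrix.mulVec_mulVec,
      ← Matrix.mulVec_smul, ← Matrix.mulVec_smul, ih', Mmat_mulVec, Lmat_mulVec]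
    funext i
    have e1 : 2 * (k + 1) = 2 * k + 2 := by ring
    have e2 : 2 * (k + 1) + 1 = 2 * k + 3 := by ring
    fin_cases i <;>
      (simp [e1, e2]; simp only [h2, h1]; ring)

theorem stmt_8 (m : ℕ) (hm2 : 2 ≤ m) (hme : Even m) (a : ℕ → ℤ) (q p : ℤ)
    (z : ℕ → ℤ) (hz0 : z 0 = q) (hz1 : z 1 = p)
    (hrec : ∀ n, 1 ≤ n → n ≤ m → z (n + 1) = 2 * a n * z n + z (n - 1)) :
    (2 : ℤ) • (prodMat a m).mulVec ![q, p, 0, 0] =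
      ![z m + q, z (m + 1) + p, -(z m - q), -(z (m + 1) - p)] := by
  obtain ⟨k, hk⟩ := hme
  have hm : m = 2 * k := by omega
  subst hm
  exact key a q p z hz0 hz1 k (by omega) hrec
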